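/- With (A, A*) a Leonard pair whose tridiagonal-relation scalars are β, γ, γ*, ϱ, ϱ*, the following hold: γ = θ_{i−1} − β·θ_i + θ_{i+1} for 1 ≤ i ≤ d−1; and ϱ = θ_{i−1}² − β·θ_{i−1}·θ_i + θ_i² − γ·(θ_{i−1} + θ_i) for 1 ≤ i ≤ d, where θ_0, ..., θ_d are the ordered eigenvalues of A. -/

import Mathlib

/-- A square matrix is irreducible tridiagonal: nonzero entries lie within
distance one of the diagonal, and all sub- and superdiagonal entries are nonzero. -/
def IsIrreducibleTridiagonal {K : Type*} [Field K] {n : ℕ}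
    (M : Matrix (Fin n) (Fin n) K) : Prop :=
  (∀ i j : Fin n, ((i : ℕ) + 1 < j ∨ (j : ℕ) + 1 < i) → M i j = 0) ∧
  (∀ i j : Fin n, ((i : ℕ) + 1 = j ∨ (j : ℕ) + 1 = i) → M i j ≠ 0)

/-- The tridiagonal relations for the pair `(A, B)` with parameters `β, γ, γ*, ϱ, ϱ*`. -/
def TridiagonalRelations {K V : Type*} [Field K] [AddCommGroup V] [Module K V]
    (A B : Module.End K V) (β γ γs ϱ ϱs : K) : Prop :=
  (A * (A ^ 2 * B - β • (A * B * A) + B * A ^ 2 - γ • (A * B + B * A) - ϱ • B) =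
    (A ^ 2 * B - β • (A * B * A) + B * A ^ 2 - γ • (A * B + B * A) - ϱ • B) * A) ∧
  (B * (B ^ 2 * A - β • (B * A * B) + A * B ^ 2 - γs • (B * A + A * B) - ϱs • A) =
    (B ^ 2 * A - β • (B * A * B) + A * B ^ 2 - γs • (B * A + A * B) - ϱs • A) * B)

lemma tridiag_ker {K : Type*} [Field K] {n : ℕ} (N : Matrix (Fin (n+1)) (Fin (n+1)) K)
    (hz : ∀ i j : Fin (n+1), ((i:ℕ)+1 < j ∨ (j:ℕ)+1 < i) → N i j = 0)
    (hnz : ∀ i j : Fin (n+1), (i:ℕ)+1 = j → N i j ≠ 0)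
    (v : Fin (n+1) → K) (hv : N.mulVec v = 0) (h0 : v ⟨0, Nat.succ_pos n⟩ = 0) :
    v = 0 := by
  have main : ∀ k : ℕ, (hk : k < n+1) → v ⟨k, hk⟩ = 0 := by
    intro k
    induction k using Nat.strong_induction_on with
    | _ k ih =>
      intro hk
      match k, hk with
      | 0, hk => exact h0
      | (m+1), hk =>
        have hrow := congrFun hv ⟨m, by omega⟩
        rw [Matrix.mulVec, dotProduct] at hrow
        rw [Finset.sum_eq_single (⟨m+1, hk⟩ : Fin (n+1))] at hrow
        · exact (mul_eq_zero.1 hrow).resolve_left (hnz _ _ rfl)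
        · intro j _ hj
          rcases lt_or_gt_of_ne (show (j:ℕ) ≠ m+1 from fun h => hj (Fin.ext h)) with h | h
          · have hzv := ih j.1 h j.isLt
            simp only [Fin.eta] at hzv
            rw [hzv, mul_zero]
          · rw [hz _ _ (Or.inl h), zero_mul]
        · intro h; exact absurd (Finset.mem_univ _) h
  funext j
  have := main j.1 j.isLt
  simpa using this

-- distinctness of eigenvalues
lemma theta_inj {K V : Type*} [Field K] [AddCommGroup V] [Module K V]
    (d : ℕ) (A : Module.End K V)
    (b : Module.Basis (Fin (d + 1)) K V)
    (hz : ∀ i j : Fin (d+1), ((i:ℕ)+1 < j ∨ (j:ℕ)+1 < i) → LinearMap.toMatrix b b A i j = 0)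
    (hnz : ∀ i j : Fin (d+1), (i:ℕ)+1 = j → LinearMap.toMatrix b b A i j ≠ 0)
    (c : Module.Basis (Fin (d + 1)) K V)
    (hAdiag : (LinearMap.toMatrix c c A).IsDiag)
    (θ : Fin (d + 1) → K) (hθ : ∀ i, θ i = LinearMap.toMatrix c c A i i) :
    Function.Injective θ := by
  have hAc : ∀ k, A (c k) = θ k • c k := by
    intro k
    rw [← c.sum_repr (A (c k)), Finset.sum_eq_single k]
    · rw [show c.repr (A (c k)) k = LinearMap.toMatrix c c A k k from
        (LinearMap.toMatrix_apply c c A k k).symm, ← hθ]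
    · intro l _ hl
      rw [show c.repr (A (c k)) l = LinearMap.toMatrix c c A l k from
        (LinearMap.toMatrix_apply c c A l k).symm, hAdiag hl, zero_smul]
    · intro h; exact absurd (Finset.mem_univ _) h
  intro i j hij
  by_contra hne
  set N' : Matrix (Fin (d+1)) (Fin (d+1)) K := LinearMap.toMatrix b b A - θ i • 1 with hN'
  have hoff : ∀ x y : Fin (d+1), x ≠ y → N' x y = LinearMap.toMatrix b b A x y := by
    intro x y hxy
    simp [hN', Matrix.one_apply_ne hxy]
  have hz' : ∀ x y : Fin (d+1), ((x:ℕ)+1 < y ∨ (y:ℕ)+1 < x) → N' x y = 0 := by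
    intro x y h
    rw [hoff x y (by rcases h with h | h <;> (intro e; subst e; omega))]
    exact hz x y h
  have hnz' : ∀ x y : Fin (d+1), (x:ℕ)+1 = y → N' x y ≠ 0 := by
    intro x y h
    rw [hoff x y (by intro e; subst e; omega)]
    exact hnz x y h
  have hker : ∀ x : V, A x = θ i • x → N'.mulVec (b.repr x) = 0 := by
    intro x hx
    rw [hN', Matrix.sub_mulVec, LinearMap.toMatrix_mulVec_repr, hx,
      Matrix.smul_mulVec, Matrix.one_mulVec, map_smul]
    simp [sub_self]
  have hu : N'.mulVec (b.repr (c i)) = 0 := hker _ (hAc i)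
  have hw : N'.mulVec (b.repr (c j)) = 0 := hker _ (by rw [hAc j, ← hij])
  set u : Fin (d+1) → K := ⇑(b.repr (c i)) with hudef
  set w : Fin (d+1) → K := ⇑(b.repr (c j)) with hwdef
  set z0 : Fin (d+1) := ⟨0, Nat.succ_pos d⟩ with hz0def
  have hzker : N'.mulVec (u z0 • w - w z0 • u) = 0 := by
    rw [Matrix.mulVec_sub, Matrix.mulVec_smul, Matrix.mulVec_smul, hu, hw]
    simp
  have hzzero : (u z0 • w - w z0 • u) z0 = 0 := by
    simp [mul_comm]
  have hz : u z0 • w - w z0 • u = 0 := tridiag_ker N' hz' hnz' _ hzker hzzero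
  have hvec : u z0 • c j - w z0 • c i = 0 := by
    have h0 : b.repr (u z0 • c j - w z0 • c i) = 0 := by
      ext x
      have := congrFun hz x
      simpa [hudef, hwdef] using this
    exact (LinearEquiv.map_eq_zero_iff b.repr).1 h0
  -- apply c.repr and evaluate at j to get u z0 = 0
  have huz0 : u z0 = 0 := by
    have h2 := congrArg (fun v => (c.repr v) j) hvec
    simpa [Finsupp.single_apply, hne] using h2
  have hu0 : u = 0 := tridiag_ker N' hz' hnz' u hu huz0
  have : c i = 0 := by
    have : b.repr (c i) = 0 := by ext x; exact congrFun hu0 x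
    simpa using this
  exact c.ne_zero i this

theorem stmt_16 {K V : Type*} [Field K] [AddCommGroup V] [Module K V]
    (d : ℕ) (A B : Module.End K V)
    (b : Module.Basis (Fin (d + 1)) K V)
    (hAtri : IsIrreducibleTridiagonal (LinearMap.toMatrix b b A))
    (hBdiag : (LinearMap.toMatrix b b B).IsDiag)
    (c : Module.Basis (Fin (d + 1)) K V)
    (hBtri : IsIrreducibleTridiagonal (LinearMap.toMatrix c c B))
    (hAdiag : (LinearMap.toMatrix c c A).IsDiag)
    (θ : Fin (d + 1) → K) (hθ : ∀ i, θ i = LinearMap.toMatrix c c A i i)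
    (β γ γs ϱ ϱs : K)
    (hrel : TridiagonalRelations A B β γ γs ϱ ϱs) :
    (∀ i : ℕ, (h1 : 1 ≤ i) → (h2 : i + 1 ≤ d) →
      γ = θ ⟨i - 1, by omega⟩ - β * θ ⟨i, by omega⟩ + θ ⟨i + 1, by omega⟩) ∧
    (∀ i : ℕ, (h1 : 1 ≤ i) → (h2 : i ≤ d) →
      ϱ = θ ⟨i - 1, by omega⟩ ^ 2 - β * θ ⟨i - 1, by omega⟩ * θ ⟨i, by omega⟩ +
        θ ⟨i, by omega⟩ ^ 2 - γ * (θ ⟨i - 1, by omega⟩ + θ ⟨i, by omega⟩)) := by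
  have hinj : Function.Injective θ :=
    theta_inj d A b (fun i j h => hAtri.1 i j h)
      (fun i j h => hAtri.2 i j (Or.inl h)) c hAdiag θ hθ
  have hMdiag : LinearMap.toMatrix c c A = Matrix.diagonal θ := by
    ext i j
    by_cases h : i = j
    · subst h; rw [Matrix.diagonal_apply_eq, ← hθ]
    · rw [hAdiag h, Matrix.diagonal_apply_ne _ h]
  have h1 := congrArg (LinearMap.toMatrixAlgEquiv c) hrel.1
  have hconv : ∀ f : Module.End K V, LinearMap.toMatrixAlgEquiv c f = LinearMap.toMatrix c c f :=
    fun f => rfl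
  simp only [map_mul, map_add, map_sub, map_smul, map_pow] at h1
  simp only [hconv, hMdiag] at h1
  set NB := LinearMap.toMatrix c c B with hNB
  have key : ∀ i j : Fin (d+1),
      (θ i - θ j) * ((θ i^2 - β*θ i*θ j + θ j^2 - γ*(θ i + θ j) - ϱ) * NB i j) = 0 := by
    intro i j
    have h2 := congrFun (congrFun h1 i) j
    simp only [pow_two, Matrix.diagonal_mul_diagonal, Matrix.sub_apply, Matrix.add_apply,
      Matrix.smul_apply, smul_eq_mul, Matrix.diagonal_mul, Matrix.mul_diagonal,
      Pi.mul_apply] at h2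
    linear_combination h2
  have hP : ∀ i j : Fin (d+1), ((i:ℕ)+1 = j ∨ (j:ℕ)+1 = i) →
      θ i^2 - β*θ i*θ j + θ j^2 - γ*(θ i + θ j) - ϱ = 0 := by
    intro i j hadj
    have hNij : NB i j ≠ 0 := hBtri.2 i j hadj
    have hij : i ≠ j := by
      rintro rfl
      rcases hadj with h | h <;> omega
    have hθij : θ i - θ j ≠ 0 := sub_ne_zero.2 (fun h => hij (hinj h))
    have hk := key i j
    have := (mul_eq_zero.1 hk).resolve_left hθij
    exact (mul_eq_zero.1 this).resolve_right hNij
  constructor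
  · intro i hi1 hi2
    have P1 := hP ⟨i-1, by omega⟩ ⟨i, by omega⟩ (Or.inl (by simp; omega))
    have P2 := hP ⟨i, by omega⟩ ⟨i+1, by omega⟩ (Or.inl (by simp))
    have hne : θ ⟨i-1, by omega⟩ - θ ⟨i+1, by omega⟩ ≠ 0 := by
      refine sub_ne_zero.2 (fun h => ?_)
      have := hinj h
      rw [Fin.mk.injEq] at this
      omega
    have hfac : (θ ⟨i-1, by omega⟩ - θ ⟨i+1, by omega⟩) *
        (θ ⟨i-1, by omega⟩ + θ ⟨i+1, by omega⟩ - β * θ ⟨i, by omega⟩ - γ) = 0 := by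
      linear_combination P1 - P2
    have hzero := (mul_eq_zero.1 hfac).resolve_left hne
    linear_combination -hzero
  · intro i hi1 hi2
    have P1 := hP ⟨i-1, by omega⟩ ⟨i, by omega⟩ (Or.inl (by simp; omega))
    linear_combination -P1
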